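/- Fix a prime p and an integer n ≥ 1. Define E_n as the set of formal 2×2 matrices [[a, b], [c, d]] with a, d ∈ F_p[ε]/(ε^{n+1}) and b, c ∈ F_p[ε]/(ε^n), with addition componentwise and multiplication given by the usual 2×2 matrix formula except that each product of two off-diagonal entries (b·c' or c·b') is first computed in F_p[ε]/(ε^n) and then multiplied by ε and viewed in F_p[ε]/(ε^{n+1}) (via the multiplication map x ↦ ε·x), while products of a diagonal entry with an off-diagonal entry reduce the diagonal entry modulo ε^n. Then E_n is an associative unital F_p[ε]/(ε^{n+1})-algebra. -/

import Mathlib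

/-!
STATEMENT 7: The 1-reducible generalized matrix algebra `E_n` over `F_p[ε]/(ε^{n+1})`,
with diagonal entries in `F_p[ε]/(ε^{n+1})` and off-diagonal entries in `F_p[ε]/(ε^n)`,
where the product of two off-diagonal entries is multiplied by `ε`, is an associative
unital `F_p[ε]/(ε^{n+1})`-algebra.
-/

open Polynomial

noncomputable section

/-- `F_p[ε]/(ε^k)`, realized as `F_p[X]/(X^k)`. -/
abbrev Rq (p k : ℕ) : Type :=
  Polynomial (ZMod p) ⧸ Ideal.span {(X : Polynomial (ZMod p)) ^ k}

/-- The quotient map `F_p[X] → F_p[ε]/(ε^k)`. -/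
abbrev mkq (p k : ℕ) : Polynomial (ZMod p) →+* Rq p k := Ideal.Quotient.mk _

/-- The reduction map `F_p[ε]/(ε^{k+1}) → F_p[ε]/(ε^k)`. -/
def redq (p k : ℕ) : Rq p (k + 1) →+* Rq p k :=
  Ideal.Quotient.factor (by
    rw [Ideal.span_singleton_le_span_singleton]
    exact pow_dvd_pow X (Nat.le_succ k))

/-- The multiplication-by-`ε` map `F_p[ε]/(ε^k) → F_p[ε]/(ε^{k+1})`. -/
def epsq (p k : ℕ) : Rq p k →ₗ[Polynomial (ZMod p)] Rq p (k + 1) :=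
  Submodule.mapQ _ _ (LinearMap.mulLeft (Polynomial (ZMod p)) X)
    (by
      refine Submodule.span_le.mpr ?_
      rintro f hf
      rw [Set.mem_singleton_iff] at hf
      subst hf
      rw [SetLike.mem_coe, Submodule.mem_comap, LinearMap.mulLeft_apply]
      exact Ideal.mem_span_singleton.mpr ⟨1, by ring⟩)

/-- The carrier of the 1-reducible GMA `E_n`: formal matrices `[[a,b],[c,d]]` with `a, d` in
`F_p[ε]/(ε^{n+1})` and `b, c` in `F_p[ε]/(ε^n)`, encoded as `(a, b, c, d)`. -/
abbrev GMA (p n : ℕ) : Type := Rq p (n + 1) × Rq p n × Rq p n × Rq p (n + 1)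

namespace GMA

/-- The 1-reducible GMA multiplication: usual 2×2 matrix multiplication, except that the
product of two off-diagonal entries is computed in `F_p[ε]/(ε^n)` and then multiplied into
`F_p[ε]/(ε^{n+1})` by `ε`, while products of a diagonal entry with an off-diagonal entry
reduce the diagonal entry modulo `ε^n`. -/
def mul {p n : ℕ} (x y : GMA p n) : GMA p n :=
  ( x.1 * y.1 + epsq p n (x.2.1 * y.2.2.1),
    redq p n x.1 * y.2.1 + x.2.1 * redq p n y.2.2.2,
    x.2.2.1 * redq p n y.1 + redq p n x.2.2.2 * y.2.2.1,
    x.2.2.2 * y.2.2.2 + epsq p n (x.2.2.1 * y.2.1) )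

/-- The multiplicative identity of `E_n`. -/
def one (p n : ℕ) : GMA p n := (1, 0, 0, 1)

/-- The `F_p[ε]/(ε^{n+1})`-scalar multiplication on `E_n`. -/
def smul {p n : ℕ} (r : Rq p (n + 1)) (x : GMA p n) : GMA p n :=
  (r * x.1, redq p n r * x.2.1, redq p n r * x.2.2.1, r * x.2.2.2)

end GMA


private lemma eps_mk (p k : ℕ) (f : Polynomial (ZMod p)) :
    epsq p k (mkq p k f) = mkq p (k + 1) (X * f) := rfl

private lemma red_mk (p k : ℕ) (f : Polynomial (ZMod p)) :
    redq p k (mkq p (k + 1) f) = mkq p k f := rfl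

private lemma gma_surj {p n : ℕ} (x : GMA p n) :
    ∃ a b c d : Polynomial (ZMod p),
      x = (mkq p (n + 1) a, mkq p n b, mkq p n c, mkq p (n + 1) d) := by
  obtain ⟨a, b, c, d⟩ := x
  obtain ⟨a, rfl⟩ := Ideal.Quotient.mk_surjective a
  obtain ⟨b, rfl⟩ := Ideal.Quotient.mk_surjective b
  obtain ⟨c, rfl⟩ := Ideal.Quotient.mk_surjective c
  obtain ⟨d, rfl⟩ := Ideal.Quotient.mk_surjective d
  exact ⟨a, b, c, d, rfl⟩

private lemma one_mk (p n : ℕ) :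
    GMA.one p n
      = (mkq p (n + 1) 1, mkq p n 0, mkq p n 0, mkq p (n + 1) 1) := by
  simp [GMA.one]

/-- `E_n` is an associative unital `F_p[ε]/(ε^{n+1})`-algebra: the GMA
multiplication is associative, `(1,0,0,1)` is a two-sided identity, multiplication is
bi-additive, and the scalar multiplication satisfies the module and algebra axioms. -/
theorem gma_is_associative_unital_algebra (p n : ℕ) [Fact p.Prime] :
    (∀ x y z : GMA p n, GMA.mul (GMA.mul x y) z = GMA.mul x (GMA.mul y z)) ∧
    (∀ x : GMA p n, GMA.mul (GMA.one p n) x = x) ∧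
    (∀ x : GMA p n, GMA.mul x (GMA.one p n) = x) ∧
    (∀ x y z : GMA p n, GMA.mul (x + y) z = GMA.mul x z + GMA.mul y z) ∧
    (∀ x y z : GMA p n, GMA.mul x (y + z) = GMA.mul x y + GMA.mul x z) ∧
    (∀ x : GMA p n, GMA.smul (1 : Rq p (n + 1)) x = x) ∧
    (∀ (r s : Rq p (n + 1)) (x : GMA p n),
      GMA.smul (r * s) x = GMA.smul r (GMA.smul s x)) ∧
    (∀ (r s : Rq p (n + 1)) (x : GMA p n),
      GMA.smul (r + s) x = GMA.smul r x + GMA.smul s x) ∧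
    (∀ (r : Rq p (n + 1)) (x y : GMA p n),
      GMA.smul r (x + y) = GMA.smul r x + GMA.smul r y) ∧
    (∀ (r : Rq p (n + 1)) (x y : GMA p n),
      GMA.mul (GMA.smul r x) y = GMA.smul r (GMA.mul x y)) ∧
    (∀ (r : Rq p (n + 1)) (x y : GMA p n),
      GMA.mul x (GMA.smul r y) = GMA.smul r (GMA.mul x y)) := by
  constructor
  · intro x y z
    obtain ⟨a, b, c, d, rfl⟩ := gma_surj x
    obtain ⟨a', b', c', d', rfl⟩ := gma_surj y
    obtain ⟨a'', b'', c'', d'', rfl⟩ := gma_surj z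
    simp only [GMA.mul, red_mk, ← map_mul, ← map_add, eps_mk, Prod.mk.injEq]
    refine ⟨congrArg _ (by ring), congrArg _ (by ring), congrArg _ (by ring),
      congrArg _ (by ring)⟩
  constructor
  · intro x
    obtain ⟨a, b, c, d, rfl⟩ := gma_surj x
    simp only [GMA.mul, one_mk, red_mk, ← map_mul, ← map_add, eps_mk, Prod.mk.injEq]
    refine ⟨congrArg _ (by ring), congrArg _ (by ring), congrArg _ (by ring),
      congrArg _ (by ring)⟩
  constructor
  · intro x
    obtain ⟨a, b, c, d, rfl⟩ := gma_surj x
    simp only [GMA.mul, one_mk, red_mk, ← map_mul, ← map_add, eps_mk, Prod.mk.injEq]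
    refine ⟨congrArg _ (by ring), congrArg _ (by ring), congrArg _ (by ring),
      congrArg _ (by ring)⟩
  constructor
  · intro x y z
    obtain ⟨a, b, c, d, rfl⟩ := gma_surj x
    obtain ⟨a', b', c', d', rfl⟩ := gma_surj y
    obtain ⟨a'', b'', c'', d'', rfl⟩ := gma_surj z
    simp only [GMA.mul, Prod.mk_add_mk, red_mk, ← map_mul, ← map_add, eps_mk,
      Prod.mk.injEq]
    refine ⟨congrArg _ (by ring), congrArg _ (by ring), congrArg _ (by ring),
      congrArg _ (by ring)⟩
  constructor
  · intro x y z
    obtain ⟨a, b, c, d, rfl⟩ := gma_surj x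
    obtain ⟨a', b', c', d', rfl⟩ := gma_surj y
    obtain ⟨a'', b'', c'', d'', rfl⟩ := gma_surj z
    simp only [GMA.mul, Prod.mk_add_mk, red_mk, ← map_mul, ← map_add, eps_mk,
      Prod.mk.injEq]
    refine ⟨congrArg _ (by ring), congrArg _ (by ring), congrArg _ (by ring),
      congrArg _ (by ring)⟩
  constructor
  · intro x
    obtain ⟨a, b, c, d, rfl⟩ := gma_surj x
    simp [GMA.smul]
  constructor
  · intro r s x
    obtain ⟨r, rfl⟩ := Ideal.Quotient.mk_surjective r
    obtain ⟨s, rfl⟩ := Ideal.Quotient.mk_surjective s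
    obtain ⟨a, b, c, d, rfl⟩ := gma_surj x
    simp only [GMA.smul, red_mk, ← map_mul, ← map_add, Prod.mk.injEq]
    refine ⟨congrArg _ (by ring), congrArg _ (by ring), congrArg _ (by ring),
      congrArg _ (by ring)⟩
  constructor
  · intro r s x
    obtain ⟨r, rfl⟩ := Ideal.Quotient.mk_surjective r
    obtain ⟨s, rfl⟩ := Ideal.Quotient.mk_surjective s
    obtain ⟨a, b, c, d, rfl⟩ := gma_surj x
    simp only [GMA.smul, Prod.mk_add_mk, red_mk, ← map_mul, ← map_add, Prod.mk.injEq]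
    refine ⟨congrArg _ (by ring), congrArg _ (by ring), congrArg _ (by ring),
      congrArg _ (by ring)⟩
  constructor
  · intro r x y
    obtain ⟨r, rfl⟩ := Ideal.Quotient.mk_surjective r
    obtain ⟨a, b, c, d, rfl⟩ := gma_surj x
    obtain ⟨a', b', c', d', rfl⟩ := gma_surj y
    simp only [GMA.smul, Prod.mk_add_mk, red_mk, ← map_mul, ← map_add, Prod.mk.injEq]
    refine ⟨congrArg _ (by ring), congrArg _ (by ring), congrArg _ (by ring),
      congrArg _ (by ring)⟩
  constructor
  · intro r x y
    obtain ⟨r, rfl⟩ := Ideal.Quotient.mk_surjective r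
    obtain ⟨a, b, c, d, rfl⟩ := gma_surj x
    obtain ⟨a', b', c', d', rfl⟩ := gma_surj y
    simp only [GMA.mul, GMA.smul, Prod.mk_add_mk, red_mk, ← map_mul, ← map_add,
      eps_mk, Prod.mk.injEq]
    refine ⟨congrArg _ (by ring), congrArg _ (by ring), congrArg _ (by ring),
      congrArg _ (by ring)⟩
  · intro r x y
    obtain ⟨r, rfl⟩ := Ideal.Quotient.mk_surjective r
    obtain ⟨a, b, c, d, rfl⟩ := gma_surj x
    obtain ⟨a', b', c', d', rfl⟩ := gma_surj y
    simp only [GMA.mul, GMA.smul, Prod.mk_add_mk, red_mk, ← map_mul, ← map_add,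
      eps_mk, Prod.mk.injEq]
    refine ⟨congrArg _ (by ring), congrArg _ (by ring), congrArg _ (by ring),
      congrArg _ (by ring)⟩

end
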